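/- Let H be a real inner product space, v₁, …, v_T ∈ H with ‖v_t‖ ≤ 1 for all t, and σ > 0. For each t, let K_{t−1} be the Gram matrix of v₁, …, v_{t−1}, k_{t−1} = (⟨v_i, v_t⟩)_{i≤t−1}, and s_{t−1}² = ‖v_t‖² − k_{t−1}ᵀ (K_{t−1} + σ²I)⁻¹ k_{t−1} (with s₀² = ‖v₁‖²). Then Σ_{t=1}^T s_{t−1}² ≤ (2 / log(1 + σ⁻²)) · ½ log det(I + σ⁻² K_T), where K_T is the Gram matrix of v₁, …, v_T. -/

import Mathlib

open scoped RealInnerProductSpace Matrix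

/-- The Gram matrix of a finite family of vectors in a real inner product space. -/
noncomputable def gram {H : Type*} [NormedAddCommGroup H] [InnerProductSpace ℝ H]
    {T : ℕ} (v : Fin T → H) : Matrix (Fin T) (Fin T) ℝ :=
  Matrix.of fun i j => ⟪v i, v j⟫

/-- The vector of inner products of a point `x` with the family `v`. -/
noncomputable def kvec {H : Type*} [NormedAddCommGroup H] [InnerProductSpace ℝ H]
    {T : ℕ} (v : Fin T → H) (x : H) : Fin T → ℝ :=
  fun i => ⟪v i, x⟫

/-- The noise-regularized sequential posterior variance
`s(x)² = ‖x‖² - k(x)ᵀ (K + σ²I)⁻¹ k(x)` of a point `x` given observations at `v`. -/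
noncomputable def postVarSq {H : Type*} [NormedAddCommGroup H] [InnerProductSpace ℝ H]
    {T : ℕ} (σ : ℝ) (v : Fin T → H) (x : H) : ℝ :=
  ‖x‖ ^ 2 - kvec v x ⬝ᵥ ((gram v + σ ^ 2 • (1 : Matrix (Fin T) (Fin T) ℝ))⁻¹ *ᵥ kvec v x)

section Aux
variable {H : Type*} [NormedAddCommGroup H] [InnerProductSpace ℝ H]

lemma dot_gram {T : ℕ} (v : Fin T → H) (w : Fin T → ℝ) :
    w ⬝ᵥ (gram v *ᵥ w) = ⟪∑ i, w i • v i, ∑ i, w i • v i⟫ := by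
  simp only [gram, Matrix.mulVec, dotProduct, Matrix.of_apply, sum_inner, inner_sum,
    real_inner_smul_left, real_inner_smul_right, Finset.mul_sum]
  exact Finset.sum_congr rfl fun i _ => Finset.sum_congr rfl fun j _ => by rw [real_inner_comm]; ring

lemma gram_posSemidef {T : ℕ} (v : Fin T → H) : (gram v).PosSemidef := by
  refine Matrix.PosSemidef.of_dotProduct_mulVec_nonneg ?_ ?_
  · ext i j
    simp [gram, Matrix.conjTranspose_apply, real_inner_comm]
  · intro w
    simp only [star_trivial]
    rw [dot_gram]
    exact real_inner_self_nonneg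

lemma regGram_posDef {T : ℕ} (v : Fin T → H) {σ : ℝ} (hσ : 0 < σ) :
    (gram v + σ ^ 2 • (1 : Matrix (Fin T) (Fin T) ℝ)).PosDef := by
  refine Matrix.posDef_iff_dotProduct_mulVec.2 ⟨?_, ?_⟩
  · exact (gram_posSemidef v).1.add (by simp [Matrix.IsHermitian])
  · intro x hx
    simp only [star_trivial, Matrix.add_mulVec, dotProduct_add,
      Matrix.smul_mulVec, Matrix.one_mulVec, dotProduct_smul]
    have h1 : (0:ℝ) ≤ x ⬝ᵥ gram v *ᵥ x := by rw [dot_gram]; exact real_inner_self_nonneg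
    have h2 : (0:ℝ) < x ⬝ᵥ x := by
      rcases lt_or_eq_of_le (dotProduct_self_star_nonneg x) with h | h
      · simpa using h
      · exact absurd (dotProduct_self_eq_zero.1 (by simpa using h.symm)) hx
    have : (0:ℝ) < σ ^ 2 * (x ⬝ᵥ x) := by positivity
    simpa [smul_eq_mul] using add_pos_of_nonneg_of_pos h1 this

end Aux

section Aux2
variable {H : Type*} [NormedAddCommGroup H] [InnerProductSpace ℝ H]

lemma quad_nonneg {T : ℕ} (v : Fin T → H) {σ : ℝ} (hσ : 0 < σ) (x : H) :
    0 ≤ kvec v x ⬝ᵥ ((gram v + σ ^ 2 • (1 : Matrix (Fin T) (Fin T) ℝ))⁻¹ *ᵥ kvec v x) := by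
  simpa using ((regGram_posDef v hσ).inv.posSemidef.dotProduct_mulVec_nonneg (kvec v x))

lemma postVarSq_le_norm_sq {T : ℕ} (v : Fin T → H) {σ : ℝ} (hσ : 0 < σ) (x : H) :
    postVarSq σ v x ≤ ‖x‖ ^ 2 :=
  sub_le_self _ (quad_nonneg v hσ x)

lemma postVarSq_nonneg {T : ℕ} (v : Fin T → H) {σ : ℝ} (hσ : 0 < σ) (x : H) :
    0 ≤ postVarSq σ v x := by
  set A := gram v + σ ^ 2 • (1 : Matrix (Fin T) (Fin T) ℝ) with hAdef
  have hA : A.PosDef := regGram_posDef v hσ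
  set w := A⁻¹ *ᵥ kvec v x with hw
  set q := kvec v x ⬝ᵥ w with hqdef
  have hq0 : 0 ≤ q := quad_nonneg v hσ x
  have hAw : A *ᵥ w = kvec v x := by
    rw [hw, Matrix.mulVec_mulVec, Matrix.mul_nonsing_inv _ (Matrix.isUnit_iff_isUnit_det _ |>.1 hA.isUnit), Matrix.one_mulVec]
  set u := ∑ i, w i • v i with hu
  have hnormu : ‖u‖ ^ 2 ≤ q := by
    have e1 : w ⬝ᵥ (gram v *ᵥ w) = ‖u‖ ^ 2 := by
      rw [dot_gram, real_inner_self_eq_norm_sq]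
    have e2 : w ⬝ᵥ (A *ᵥ w) = q := by
      rw [hAw, dotProduct_comm]
    have e3 : w ⬝ᵥ (A *ᵥ w) = ‖u‖ ^ 2 + σ ^ 2 * (w ⬝ᵥ w) := by
      rw [hAdef]
      simp only [Matrix.add_mulVec, dotProduct_add, Matrix.smul_mulVec,
        Matrix.one_mulVec, dotProduct_smul, smul_eq_mul, e1]
    have hw2 : 0 ≤ w ⬝ᵥ w := by simpa using dotProduct_self_star_nonneg w
    nlinarith
  have hqux : q = ⟪u, x⟫ := by
    rw [hqdef, hu]
    simp only [dotProduct, kvec, sum_inner, real_inner_smul_left]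
    exact Finset.sum_congr rfl fun i _ => by ring
  have h2 : q ≤ Real.sqrt q * ‖x‖ := by
    rw [hqux]
    refine le_trans (real_inner_le_norm u x) (mul_le_mul_of_nonneg_right ?_ (norm_nonneg x))
    rw [← hqux]
    exact (Real.le_sqrt (norm_nonneg u) hq0).2 hnormu
  have : q ≤ ‖x‖ ^ 2 := by
    nlinarith [sq_nonneg (Real.sqrt q - ‖x‖), Real.sq_sqrt hq0, Real.sqrt_nonneg q, norm_nonneg x]
  simpa [postVarSq, ← hAdef, ← hw, ← hqdef] using sub_nonneg.2 this

end Aux2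

section Det
variable {H : Type*} [NormedAddCommGroup H] [InnerProductSpace ℝ H]

lemma det_succ {t : ℕ} (w : Fin (t + 1) → H) {σ : ℝ} (hσ : 0 < σ) :
    (gram w + σ ^ 2 • (1 : Matrix (Fin (t+1)) (Fin (t+1)) ℝ)).det
      = (gram (fun i : Fin t => w i.castSucc)
            + σ ^ 2 • (1 : Matrix (Fin t) (Fin t) ℝ)).det
        * (postVarSq σ (fun i : Fin t => w i.castSucc) (w (Fin.last t)) + σ ^ 2) := by
  set wc : Fin t → H := fun i => w i.castSucc with hwc
  set x : H := w (Fin.last t) with hx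
  set k : Fin t → ℝ := kvec wc x with hk
  set A : Matrix (Fin t) (Fin t) ℝ := gram wc + σ ^ 2 • 1 with hA
  set B : Matrix (Fin t) (Fin 1) ℝ := Matrix.of (fun i _ => k i) with hB
  set C : Matrix (Fin 1) (Fin t) ℝ := Matrix.of (fun _ j => k j) with hC
  set D : Matrix (Fin 1) (Fin 1) ℝ := Matrix.of (fun _ _ => ‖x‖ ^ 2 + σ ^ 2) with hD
  have hnat : (Fin.natAdd t (0 : Fin 1)) = Fin.last t := by ext; simp
  have hgsub : (gram w).submatrix finSumFinEquiv finSumFinEquiv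
      = Matrix.fromBlocks (gram wc) B C (Matrix.of (fun _ _ : Fin 1 => ‖x‖ ^ 2)) := by
    ext (i | i) (j | j) <;>
      simp [gram, kvec, hwc, hx, hk, hB, hC, Matrix.submatrix_apply, finSumFinEquiv_apply_left,
        finSumFinEquiv_apply_right, hnat, Fin.fin_one_eq_zero, real_inner_comm,
        real_inner_self_eq_norm_sq, Fin.castSucc]
  have hsub : (gram w + σ ^ 2 • (1 : Matrix (Fin (t+1)) (Fin (t+1)) ℝ)).submatrix
        finSumFinEquiv finSumFinEquiv = Matrix.fromBlocks A B C D := by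
    have hrfl : (gram w + σ ^ 2 • (1 : Matrix (Fin (t+1)) (Fin (t+1)) ℝ)).submatrix
        finSumFinEquiv finSumFinEquiv
        = (gram w).submatrix finSumFinEquiv finSumFinEquiv
          + σ ^ 2 • (1 : Matrix (Fin (t+1)) (Fin (t+1)) ℝ).submatrix finSumFinEquiv
              finSumFinEquiv := rfl
    rw [hrfl, Matrix.submatrix_one_equiv, hgsub]
    ext (i | i) (j | j) <;>
      simp [hA, hD, Matrix.fromBlocks, Matrix.one_apply, Fin.fin_one_eq_zero]
  have hAposdef : A.PosDef := regGram_posDef wc hσ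
  haveI : Invertible A := hAposdef.isUnit.invertible
  have hdet : (gram w + σ ^ 2 • (1 : Matrix (Fin (t+1)) (Fin (t+1)) ℝ)).det
      = A.det * (D - C * ⅟A * B).det := by
    rw [← Matrix.det_submatrix_equiv_self finSumFinEquiv, hsub, Matrix.det_fromBlocks₁₁]
  rw [hdet]
  congr 1
  rw [Matrix.det_fin_one, Matrix.invOf_eq_nonsing_inv]
  show D 0 0 - (C * A⁻¹ * B) 0 0 = _
  have : (C * A⁻¹ * B) 0 0 = k ⬝ᵥ (A⁻¹ *ᵥ k) := by
    simp only [Matrix.mul_apply, Matrix.mulVec, dotProduct, hB, hC, Matrix.of_apply,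
      Finset.sum_mul, Finset.mul_sum]
    rw [Finset.sum_comm]
    exact Finset.sum_congr rfl fun i _ => Finset.sum_congr rfl fun j _ => by ring
  rw [this]
  simp [hD, postVarSq, hA, hk]
  ring

end Det

section Prod
variable {H : Type*} [NormedAddCommGroup H] [InnerProductSpace ℝ H]

lemma det_prod {σ : ℝ} (hσ : 0 < σ) (v : ℕ → H) : ∀ T : ℕ,
    (gram (fun i : Fin T => v (i.1 + 1)) + σ ^ 2 • (1 : Matrix (Fin T) (Fin T) ℝ)).det
      = ∏ t ∈ Finset.range T,
          (postVarSq σ (fun i : Fin t => v (i.1 + 1)) (v (t + 1)) + σ ^ 2)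
  | 0 => by simp
  | (T + 1) => by
    rw [Finset.prod_range_succ, ← det_prod hσ v T,
      det_succ (fun i : Fin (T + 1) => v (i.1 + 1)) hσ]
    simp [Fin.coe_castSucc, Fin.val_last]

lemma log_concave_ineq {b s : ℝ} (hb : 0 < b) (hs0 : 0 ≤ s) (hs1 : s ≤ 1) :
    s * Real.log (1 + b) ≤ Real.log (1 + b * s) := by
  have hcc := strictConcaveOn_log_Ioi.concaveOn
  have h := hcc.2 (Set.mem_Ioi.2 one_pos)
    (Set.mem_Ioi.2 (by linarith : (0:ℝ) < 1 + b))
    (by linarith : (0:ℝ) ≤ 1 - s) hs0 (by ring)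
  have harg : (1 - s) • (1:ℝ) + s • (1 + b) = 1 + b * s := by
    simp [smul_eq_mul]; ring
  rw [harg] at h
  simpa [smul_eq_mul] using h

end Prod


/-- **Sum of posterior variances bounded by the information gain (Equation (35)).**
For unit-norm-bounded feature vectors, the sum of sequential noise-regularized posterior
variances is at most `(2 / log(1 + σ⁻²)) · ½ log det(I + σ⁻² K_T)`. -/
theorem sum_posterior_variances_le_info_gain {H : Type*}
    [NormedAddCommGroup H] [InnerProductSpace ℝ H]
    (T : ℕ) (v : ℕ → H) (hv : ∀ t, 1 ≤ t → t ≤ T → ‖v t‖ ≤ 1)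
    (σ : ℝ) (hσ : 0 < σ) :
    ∑ t ∈ Finset.range T, postVarSq σ (fun i : Fin t => v (i.1 + 1)) (v (t + 1))
      ≤ (2 / Real.log (1 + (σ ^ 2)⁻¹)) *
          (1 / 2 * Real.log ((1 : Matrix (Fin T) (Fin T) ℝ)
              + (σ ^ 2)⁻¹ • gram (fun i : Fin T => v (i.1 + 1))).det) := by
  set b : ℝ := (σ ^ 2)⁻¹ with hbdef
  have hb : 0 < b := by positivity
  have hbs2 : b * σ ^ 2 = 1 := inv_mul_cancel₀ (by positivity)
  have hL : 0 < Real.log (1 + b) := Real.log_pos (by linarith)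
  set s : ℕ → ℝ := fun t => postVarSq σ (fun i : Fin t => v (i.1 + 1)) (v (t + 1)) with hs
  have hs0 : ∀ t ∈ Finset.range T, 0 ≤ s t := fun t _ => postVarSq_nonneg _ hσ _
  have hs1 : ∀ t ∈ Finset.range T, s t ≤ 1 := by
    intro t ht
    have hx : ‖v (t + 1)‖ ≤ 1 :=
      hv (t + 1) (Nat.le_add_left 1 t) (Nat.succ_le_of_lt (Finset.mem_range.1 ht))
    calc s t ≤ ‖v (t + 1)‖ ^ 2 := postVarSq_le_norm_sq _ hσ _
      _ ≤ 1 := by nlinarith [norm_nonneg (v (t + 1))]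
  have hdet : ((1 : Matrix (Fin T) (Fin T) ℝ) + b • gram (fun i : Fin T => v (i.1 + 1))).det
      = ∏ t ∈ Finset.range T, (1 + b * s t) := by
    have h1 : (1 : Matrix (Fin T) (Fin T) ℝ) + b • gram (fun i : Fin T => v (i.1 + 1))
        = b • (gram (fun i : Fin T => v (i.1 + 1)) + σ ^ 2 • 1) := by
      rw [smul_add, smul_smul, hbs2, one_smul, add_comm]
    rw [h1, Matrix.det_smul, det_prod hσ v T, Fintype.card_fin,
      show (b : ℝ) ^ T = ∏ _t ∈ Finset.range T, b by simp, ← Finset.prod_mul_distrib]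
    exact Finset.prod_congr rfl fun t _ => by rw [mul_add, hbs2]; ring
  have hpos : ∀ t ∈ Finset.range T, (0:ℝ) < 1 + b * s t := by
    intro t ht
    nlinarith [hs0 t ht]
  have hlog : Real.log ((1 : Matrix (Fin T) (Fin T) ℝ)
        + b • gram (fun i : Fin T => v (i.1 + 1))).det
      = ∑ t ∈ Finset.range T, Real.log (1 + b * s t) := by
    rw [hdet, Real.log_prod (fun t ht => (hpos t ht).ne')]
  calc ∑ t ∈ Finset.range T, s t
      ≤ ∑ t ∈ Finset.range T, (1 / Real.log (1 + b)) * Real.log (1 + b * s t) := by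
        refine Finset.sum_le_sum fun t ht => ?_
        have h := log_concave_ineq hb (hs0 t ht) (hs1 t ht)
        rw [one_div, inv_mul_eq_div, le_div_iff₀ hL]
        exact h
    _ = (2 / Real.log (1 + b)) * (1 / 2 * Real.log ((1 : Matrix (Fin T) (Fin T) ℝ)
          + b • gram (fun i : Fin T => v (i.1 + 1))).det) := by
        rw [hlog, ← Finset.mul_sum]
        ring
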